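/- For all indices i, j : Fin n, the folded generators satisfy ⁅H i, F j⁆ = −(A i j) • F j (integer scalar action on L). -/

import Mathlib

open scoped Classical

/-- The σ-orbit `⟨i⟩` of an index `i`, as a finite set. -/
noncomputable def sigmaOrbit {n : ℕ} (σ : Equiv.Perm (Fin n)) (i : Fin n) : Finset (Fin n) :=
  Finset.univ.filter fun k => σ.SameCycle i k

/-- `b i = 3 − ∑_{k ∈ ⟨i⟩} a k i`. -/
noncomputable def bFold {n : ℕ} (a : Fin n → Fin n → ℤ) (σ : Equiv.Perm (Fin n))
    (i : Fin n) : ℤ :=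
  3 - ∑ k ∈ sigmaOrbit σ i, a k i

/-- The folded Cartan matrix `A i j = b i · ∑_{k ∈ ⟨i⟩} a k j`. -/
noncomputable def AFold {n : ℕ} (a : Fin n → Fin n → ℤ) (σ : Equiv.Perm (Fin n))
    (i j : Fin n) : ℤ :=
  bFold a σ i * ∑ k ∈ sigmaOrbit σ i, a k j

/-- `E i = ∑_{k ∈ ⟨i⟩} e k`. -/
noncomputable def EFold {n : ℕ} {L : Type*} [LieRing L]
    (σ : Equiv.Perm (Fin n)) (e : Fin n → L) (i : Fin n) : L :=
  ∑ k ∈ sigmaOrbit σ i, e k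

/-- `F i = b i • ∑_{k ∈ ⟨i⟩} f k`. -/
noncomputable def FFold {n : ℕ} {L : Type*} [LieRing L]
    (a : Fin n → Fin n → ℤ) (σ : Equiv.Perm (Fin n)) (f : Fin n → L) (i : Fin n) : L :=
  bFold a σ i • ∑ k ∈ sigmaOrbit σ i, f k

/-- `H i = b i • ∑_{k ∈ ⟨i⟩} h k`. -/
noncomputable def HFold {n : ℕ} {L : Type*} [LieRing L]
    (a : Fin n → Fin n → ℤ) (σ : Equiv.Perm (Fin n)) (h : Fin n → L) (i : Fin n) : L :=
  bFold a σ i • ∑ k ∈ sigmaOrbit σ i, h k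


lemma my_lie_sum {L : Type*} [LieRing L] {ι : Type*} (s : Finset ι) (x : L) (g : ι → L) :
    ⁅x, ∑ k ∈ s, g k⁆ = ∑ k ∈ s, ⁅x, g k⁆ :=
  map_sum (AddMonoidHom.mk' (fun y => ⁅x, y⁆) (lie_add x)) g s

lemma my_sum_lie {L : Type*} [LieRing L] {ι : Type*} (s : Finset ι) (x : L) (g : ι → L) :
    ⁅∑ k ∈ s, g k, x⁆ = ∑ k ∈ s, ⁅g k, x⁆ :=
  map_sum (AddMonoidHom.mk' (fun y => ⁅y, x⁆) (fun a b => add_lie a b x)) g s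

lemma mem_sigmaOrbit_apply {n : ℕ} (σ : Equiv.Perm (Fin n)) (i k : Fin n) :
    k ∈ sigmaOrbit σ i ↔ σ k ∈ sigmaOrbit σ i := by
  simp [sigmaOrbit, Equiv.Perm.sameCycle_apply_right]

lemma sum_sigmaOrbit_apply {n : ℕ} {M : Type*} [AddCommMonoid M] (σ : Equiv.Perm (Fin n))
    (i : Fin n) (g : Fin n → M) :
    ∑ k ∈ sigmaOrbit σ i, g (σ k) = ∑ k ∈ sigmaOrbit σ i, g k := by
  refine Finset.sum_equiv σ (fun k => (mem_sigmaOrbit_apply σ i k)) (fun k _ => rfl)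

lemma sum_a_apply {n : ℕ} (a : Fin n → Fin n → ℤ) (σ : Equiv.Perm (Fin n))
    (hσ : ∀ i j, a (σ i) (σ j) = a i j) (i : Fin n) (x : Fin n) :
    ∑ k ∈ sigmaOrbit σ i, a k (σ x) = ∑ k ∈ sigmaOrbit σ i, a k x := by
  rw [← sum_sigmaOrbit_apply σ i (fun k => a k (σ x))]
  exact Finset.sum_congr rfl fun k _ => hσ k x

lemma sum_a_sameCycle {n : ℕ} (a : Fin n → Fin n → ℤ) (σ : Equiv.Perm (Fin n))
    (hσ : ∀ i j, a (σ i) (σ j) = a i j) (i : Fin n) {j l : Fin n}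
    (hl : σ.SameCycle j l) :
    ∑ k ∈ sigmaOrbit σ i, a k l = ∑ k ∈ sigmaOrbit σ i, a k j := by
  obtain ⟨m, rfl⟩ := hl
  have inv : ∀ x : Fin n, ∑ k ∈ sigmaOrbit σ i, a k (σ⁻¹ x) = ∑ k ∈ sigmaOrbit σ i, a k x := by
    intro x
    have := sum_a_apply a σ hσ i (σ⁻¹ x)
    simpa using this.symm
  induction m using Int.induction_on with
  | zero => simp
  | succ m ih =>
      have : (σ ^ (m + 1 : ℤ)) j = σ ((σ ^ (m : ℤ)) j) := by
        rw [add_comm, zpow_add, zpow_one]; rfl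
      rw [this, sum_a_apply a σ hσ i, ih]
  | pred m ih =>
      have : (σ ^ (-(m : ℤ) - 1)) j = σ⁻¹ ((σ ^ (-(m : ℤ))) j) := by
        rw [sub_eq_add_neg, add_comm, zpow_add, zpow_neg, zpow_one]; rfl
      rw [this, inv, ih]

theorem folded_H_F {K L : Type*} [Field K] [CharZero K] [LieRing L] [LieAlgebra K L]
    {n : ℕ} (hn : 1 ≤ n)
    (a : Fin n → Fin n → ℤ)
    (hdiag : ∀ i, a i i = 2)
    (hoff : ∀ i j, i ≠ j → a i j ≤ 0)
    (e f h : Fin n → L)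
    (hhh : ∀ i j, ⁅h i, h j⁆ = 0)
    (hef : ∀ i, ⁅e i, f i⁆ = h i)
    (hef' : ∀ i j, i ≠ j → ⁅e i, f j⁆ = 0)
    (hhe : ∀ i j, ⁅h i, e j⁆ = a i j • e j)
    (hhf : ∀ i j, ⁅h i, f j⁆ = (-(a i j)) • f j)
    (σ : Equiv.Perm (Fin n))
    (hσ : ∀ i j, a (σ i) (σ j) = a i j)
    (i j : Fin n) :
    ⁅HFold a σ h i, FFold a σ f j⁆ = (-(AFold a σ i j)) • FFold a σ f j := by
  classical
  set c : ℤ := ∑ k ∈ sigmaOrbit σ i, a k j with hc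
  have main : ⁅(∑ k ∈ sigmaOrbit σ i, h k), (∑ l ∈ sigmaOrbit σ j, f l)⁆
      = (-c) • ∑ l ∈ sigmaOrbit σ j, f l := by
    rw [my_lie_sum, Finset.smul_sum]
    refine Finset.sum_congr rfl fun l hl => ?_
    rw [my_sum_lie]
    have hl' : σ.SameCycle j l := by
      simpa [sigmaOrbit] using hl
    calc ∑ k ∈ sigmaOrbit σ i, ⁅h k, f l⁆
        = ∑ k ∈ sigmaOrbit σ i, (-(a k l)) • f l := by
          exact Finset.sum_congr rfl fun k _ => hhf k l
      _ = (∑ k ∈ sigmaOrbit σ i, (-(a k l))) • f l := by rw [Finset.sum_smul]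
      _ = (-c) • f l := by
          congr 1
          rw [hc]
          simpa using congrArg Neg.neg (sum_a_sameCycle a σ hσ i hl')
  unfold HFold FFold AFold
  rw [smul_lie, lie_smul, main, smul_smul, smul_smul, smul_smul]
  congr 1
  ring
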